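/- Let m : Finset(Fin n) → ℝ_{>0} be any positive function on subsets. Then Σ_{p=1}^n (1/C(n,p)) Σ_{|T|=p} (1/p) Σ_{j∈T} [log m((T∖{j})^c ∪ {j}) − log m(T^c)] = log m(univ) − log m(∅). -/

import Mathlib

open Finset

private lemma compl_bij_sum {n : ℕ} (p : ℕ) (hp : p ≤ n) (f : Finset (Fin n) → ℝ) :
    ∑ T ∈ (univ : Finset (Fin n)).powersetCard p, f Tᶜ
    = ∑ S ∈ (univ : Finset (Fin n)).powersetCard (n - p), f S := by
  apply Finset.sum_nbij' (fun T => Tᶜ) (fun S => Sᶜ)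
  · intro T hT
    simp only [mem_powersetCard_univ] at *
    rw [card_compl, Fintype.card_fin, hT]
  · intro S hS
    simp only [mem_powersetCard_univ] at *
    rw [card_compl, Fintype.card_fin, hS, Nat.sub_sub_self hp]
  · intro T hT; exact compl_compl T
  · intro S hS; exact compl_compl S
  · intro T hT; rfl

private lemma pair_sum {n : ℕ} (p : ℕ) (hp1 : 1 ≤ p) (hp : p ≤ n) (f : Finset (Fin n) → ℝ) :
    ∑ T ∈ (univ : Finset (Fin n)).powersetCard p, ∑ j ∈ T, f (Tᶜ ∪ {j})
    = ∑ U ∈ (univ : Finset (Fin n)).powersetCard (n - p + 1), ∑ _j ∈ U, f U := by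
  rw [Finset.sum_sigma', Finset.sum_sigma']
  apply Finset.sum_nbij' (fun x => ⟨x.1ᶜ ∪ {x.2}, x.2⟩)
    (fun y => ⟨(y.1.erase y.2)ᶜ, y.2⟩)
  · rintro ⟨T, j⟩ hx
    simp only [mem_sigma, mem_powersetCard_univ] at *
    obtain ⟨hT, hj⟩ := hx
    constructor
    · rw [union_comm _ _, ← insert_eq, card_insert_of_notMem (by simp [hj]), card_compl,
        Fintype.card_fin, hT]
    · simp
  · rintro ⟨U, j⟩ hy
    simp only [mem_sigma, mem_powersetCard_univ] at *
    obtain ⟨hU, hj⟩ := hy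
    constructor
    · rw [card_compl, Fintype.card_fin, card_erase_of_mem hj, hU]
      omega
    · simp [mem_compl, notMem_erase]
  · rintro ⟨T, j⟩ hx
    simp only [mem_sigma, mem_powersetCard_univ] at hx
    obtain ⟨hT, hj⟩ := hx
    have h1 : ((Tᶜ ∪ {j}).erase j)ᶜ = T := by
      rw [union_comm _ _, ← insert_eq, erase_insert (by simp [hj]), compl_compl]
    simp only [h1]
  · rintro ⟨U, j⟩ hy
    simp only [mem_sigma, mem_powersetCard_univ] at hy
    obtain ⟨hU, hj⟩ := hy
    have h1 : ((U.erase j)ᶜ)ᶜ ∪ {j} = U := by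
      rw [compl_compl, union_comm _ _, ← insert_eq, insert_erase hj]
    simp only [h1]
  · rintro ⟨T, j⟩ hx
    rfl

/-- Purely combinatorial form of Proposition 2 of Fong & Holmes: for any positive
function `m` on subsets of `{0,…,n−1}`, summing the leave-`p`-out cross-validation
scores over all `p` recovers `log m(univ) − log m(∅)`. -/
theorem stmt10 (n : ℕ) (m : Finset (Fin n) → ℝ) (hpos : ∀ S, 0 < m S) :
    ∑ p ∈ Finset.Icc 1 n, ((n.choose p : ℝ))⁻¹ *
      ∑ T ∈ (Finset.univ : Finset (Fin n)).powersetCard p, (p : ℝ)⁻¹ *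
        ∑ j ∈ T, (Real.log (m ((T \ {j})ᶜ ∪ {j})) - Real.log (m Tᶜ)) =
    Real.log (m (Finset.univ : Finset (Fin n))) - Real.log (m ∅) := by
  set f : Finset (Fin n) → ℝ := fun S => Real.log (m S) with hf
  set g : ℕ → ℝ := fun k =>
    ((n.choose k : ℝ))⁻¹ * ∑ S ∈ (univ : Finset (Fin n)).powersetCard k, f S with hg
  have hterm : ∀ p ∈ Finset.Icc 1 n,
      ((n.choose p : ℝ))⁻¹ *
        ∑ T ∈ (Finset.univ : Finset (Fin n)).powersetCard p, (p : ℝ)⁻¹ *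
          ∑ j ∈ T, (Real.log (m ((T \ {j})ᶜ ∪ {j})) - Real.log (m Tᶜ))
      = g (n - p + 1) - g (n - p) := by
    intro p hp
    simp only [mem_Icc] at hp
    obtain ⟨hp1, hpn⟩ := hp
    have hrw : ∀ (T : Finset (Fin n)) (j : Fin n), ((T \ {j})ᶜ ∪ {j}) = Tᶜ ∪ {j} := by
      intro T j; ext x
      simp only [mem_union, mem_compl, mem_sdiff, mem_singleton]
      tauto
    have h1 : ∀ T ∈ (univ : Finset (Fin n)).powersetCard p,
        (p : ℝ)⁻¹ * ∑ j ∈ T, (Real.log (m ((T \ {j})ᶜ ∪ {j})) - Real.log (m Tᶜ))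
        = (p : ℝ)⁻¹ * ((∑ j ∈ T, f (Tᶜ ∪ {j})) - (p : ℝ) * f Tᶜ) := by
      intro T hT
      rw [mem_powersetCard_univ] at hT
      congr 1
      rw [Finset.sum_sub_distrib, Finset.sum_const, nsmul_eq_mul, hT]
      congr 1
      exact Finset.sum_congr rfl fun j _ => by rw [hrw]
    rw [Finset.sum_congr rfl h1, ← Finset.mul_sum, Finset.sum_sub_distrib,
      ← Finset.mul_sum, pair_sum p hp1 hpn f, compl_bij_sum p hpn f]
    have h2 : ∑ U ∈ (univ : Finset (Fin n)).powersetCard (n - p + 1), ∑ _j ∈ U, f U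
        = ((n - p + 1 : ℕ) : ℝ) * ∑ U ∈ (univ : Finset (Fin n)).powersetCard (n - p + 1), f U := by
      rw [Finset.mul_sum]
      refine Finset.sum_congr rfl fun U hU => ?_
      rw [mem_powersetCard_univ] at hU
      rw [Finset.sum_const, nsmul_eq_mul, hU]
    rw [h2]
    set A := ∑ U ∈ (univ : Finset (Fin n)).powersetCard (n - p + 1), f U
    set B := ∑ S ∈ (univ : Finset (Fin n)).powersetCard (n - p), f S
    simp only [hg]
    have hCp : (0 : ℝ) < (n.choose p : ℝ) := by exact_mod_cast Nat.choose_pos hpn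
    have hC1 : (0 : ℝ) < (n.choose (n - p + 1) : ℝ) := by
      exact_mod_cast Nat.choose_pos (by omega)
    have hC2 : (0 : ℝ) < (n.choose (n - p) : ℝ) := by
      exact_mod_cast Nat.choose_pos (by omega)
    have hp0 : (0 : ℝ) < (p : ℝ) := by exact_mod_cast hp1
    have hnat1 : n.choose (n - p + 1) * (n - p + 1) = n.choose p * p := by
      have h := Nat.choose_succ_right_eq n (p - 1)
      have hs : p - 1 + 1 = p := by omega
      rw [hs] at h
      have hsym : n.choose (p - 1) = n.choose (n - (p - 1)) :=
        (Nat.choose_symm (show p - 1 ≤ n by omega)).symm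
      have he : n - (p - 1) = n - p + 1 := by omega
      rw [hsym, he] at h
      omega
    have hnat2 : n.choose (n - p) = n.choose p := Nat.choose_symm hpn
    have hr1 : ((n.choose (n - p + 1) : ℝ)) * ((n - p + 1 : ℕ) : ℝ)
        = (n.choose p : ℝ) * (p : ℝ) := by exact_mod_cast hnat1
    rw [hnat2]
    have hc : ((n.choose (n - p + 1) : ℝ))⁻¹
        = ((n - p + 1 : ℕ) : ℝ) / ((p : ℝ) * (n.choose p : ℝ)) := by
      rw [inv_eq_iff_eq_inv, inv_div]
      rw [eq_div_iff (by exact_mod_cast Nat.succ_ne_zero (n - p))]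
      exact_mod_cast hnat1.trans (Nat.mul_comm _ _)
    rw [hc]
    field_simp
    ring
  rw [Finset.sum_congr rfl hterm]
  have htel : ∑ p ∈ Finset.Icc 1 n, (g (n - p + 1) - g (n - p)) = g n - g 0 := by
    rw [← Finset.Ico_add_one_right_eq_Icc, Finset.sum_Ico_eq_sum_range]
    have : ∀ i ∈ Finset.range (n + 1 - 1), g (n - (1 + i) + 1) - g (n - (1 + i))
        = g (n - i) - g (n - (i + 1)) := by
      intro i hi
      rw [mem_range] at hi
      congr 2 <;> omega
    rw [Finset.sum_congr rfl this]
    have := Finset.sum_range_sub' (fun i => g (n - i)) n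
    simpa using this
  rw [htel]
  have h3 : (univ : Finset (Fin n)).powersetCard n = {univ} := by
    simpa using Finset.powersetCard_self (univ : Finset (Fin n))
  simp only [hg, h3, Nat.choose_self, Finset.powersetCard_zero,
    Nat.choose_zero_right, Nat.cast_one, inv_one, one_mul, Finset.sum_singleton]
  rfl
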